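/- Let A be a bounded positive definite self-adjoint operator and B a bounded positive semidefinite self-adjoint operator on a Hilbert space, H_κ = A + κ²B, and H_∞† = s-lim_{κ→∞} H_κ⁻¹. Then for every vector f and every κ ≥ 1, (f, H_κ⁻¹f) − (f, H_∞†f) ≥ ((f, H₁⁻¹f) − (f, H_∞†f))/κ², where H₁ = A + B. -/

import Mathlib

local notation "⟪" x ", " y "⟫" => @inner ℝ _ _ x y

section aux

variable {H : Type*} [NormedAddCommGroup H] [InnerProductSpace ℝ H] [CompleteSpace H]

/-- Cauchy–Schwarz for the semi-inner-product defined by a positive symmetric operator. -/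
lemma form_cauchy_schwarz (S : H →L[ℝ] H) (hS : IsSelfAdjoint S)
    (hpos : ∀ u : H, 0 ≤ ⟪u, S u⟫) (p q : H) :
    ⟪p, S q⟫ ^ 2 ≤ ⟪p, S p⟫ * ⟪q, S q⟫ := by
  have hsym : ∀ x y : H, ⟪S x, y⟫ = ⟪x, S y⟫ := fun x y => hS.isSymmetric x y
  have key : ∀ t : ℝ, 0 ≤ ⟪q, S q⟫ * (t * t) + (2 * ⟪p, S q⟫) * t + ⟪p, S p⟫ := by
    intro t
    have h0 := hpos (p + t • q)
    have hqp : ⟪q, S p⟫ = ⟪p, S q⟫ := by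
      rw [← hsym q p, real_inner_comm]
    have : ⟪p + t • q, S (p + t • q)⟫
        = ⟪q, S q⟫ * (t * t) + (2 * ⟪p, S q⟫) * t + ⟪p, S p⟫ := by
      simp only [map_add, map_smul, inner_add_left, inner_add_right,
        real_inner_smul_left, real_inner_smul_right, hqp]
      ring
    linarith [this ▸ h0]
  have := discrim_le_zero key
  rw [discrim] at this
  nlinarith [this]

end aux

set_option maxHeartbeats 1000000 in
/-- Lower estimate of Theorem 4.3: for `H_κ = A + κ²B`, `H_∞† = s-lim H_κ⁻¹` and every `f`
and `κ ≥ 1`, one has `(f, H_κ⁻¹f) − (f, H_∞†f) ≥ ((f, H₁⁻¹f) − (f, H_∞†f))/κ²`, where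
`H₁ = A + B`. -/
theorem regular_large_coupling_lower_estimate
    {H : Type*} [NormedAddCommGroup H] [InnerProductSpace ℝ H] [CompleteSpace H]
    (A B : H →L[ℝ] H) (hA : IsSelfAdjoint A) (hB : IsSelfAdjoint B)
    (hApos : ∃ c > (0:ℝ), ∀ u : H, c * ‖u‖ ^ 2 ≤ ⟪u, A u⟫)
    (hBpos : ∀ u : H, 0 ≤ ⟪u, B u⟫)
    (R : ℝ → (H →L[ℝ] H))
    (hRl : ∀ κ : ℝ, (A + κ ^ 2 • B) ∘L R κ = 1)
    (hRr : ∀ κ : ℝ, R κ ∘L (A + κ ^ 2 • B) = 1)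
    (G : H →L[ℝ] H)
    (hG : ∀ f : H, Filter.Tendsto (fun κ => R κ f) Filter.atTop (nhds (G f))) :
    ∀ f : H, ∀ κ : ℝ, 1 ≤ κ →
      (⟪f, R 1 f⟫ - ⟪f, G f⟫) / κ ^ 2 ≤ ⟪f, R κ f⟫ - ⟪f, G f⟫ := by
  obtain ⟨c, hc, hcA⟩ := hApos
  have hAsym : ∀ x y : H, ⟪A x, y⟫ = ⟪x, A y⟫ := fun x y => hA.isSymmetric x y
  have hBsym : ∀ x y : H, ⟪B x, y⟫ = ⟪x, B y⟫ := fun x y => hB.isSymmetric x y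
  have hAnn : ∀ u : H, 0 ≤ ⟪u, A u⟫ := fun u => le_trans (by positivity) (hcA u)
  -- applied versions of the inverse identities
  have hRlz : ∀ t : ℝ, ∀ z : H, A (R t z) + t ^ 2 • B (R t z) = z := by
    intro t z
    have := ContinuousLinearMap.ext_iff.mp (hRl t) z
    simpa using this
  have hRrz : ∀ t : ℝ, ∀ z : H, R t (A z + t ^ 2 • B z) = z := by
    intro t z
    have := ContinuousLinearMap.ext_iff.mp (hRr t) z
    simpa using this
  -- symmetry of R t
  have hRsym : ∀ t : ℝ, ∀ x y : H, ⟪R t x, y⟫ = ⟪x, R t y⟫ := by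
    intro t x y
    have hHsym : ∀ p q : H, ⟪A p + t ^ 2 • B p, q⟫ = ⟪p, A q + t ^ 2 • B q⟫ := by
      intro p q
      simp only [inner_add_left, inner_add_right, real_inner_smul_left,
        real_inner_smul_right, hAsym, hBsym]
    calc ⟪R t x, y⟫ = ⟪R t x, A (R t y) + t ^ 2 • B (R t y)⟫ := by rw [hRlz]
      _ = ⟪A (R t x) + t ^ 2 • B (R t x), R t y⟫ := (hHsym _ _).symm
      _ = ⟪x, R t y⟫ := by rw [hRlz]
  intro f κ hκ
  have hκ0 : (0:ℝ) < κ ^ 2 := by positivity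
  -- bound on the B-form of resolvents
  have hBres : ∀ t : ℝ, t ^ 2 * ⟪R t f, B (R t f)⟫ ≤ ‖f‖ ^ 2 / c := by
    intro t
    set v := R t f with hv
    have h1 : ⟪v, A v⟫ + t ^ 2 * ⟪v, B v⟫ = ⟪v, f⟫ := by
      have := hRlz t f
      calc ⟪v, A v⟫ + t ^ 2 * ⟪v, B v⟫ = ⟪v, A v + t ^ 2 • B v⟫ := by
            rw [inner_add_right, real_inner_smul_right]
        _ = ⟪v, f⟫ := by rw [this]
    have h2 : c * ‖v‖ ^ 2 ≤ ⟪v, A v⟫ := hcA v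
    have h3 : ⟪v, f⟫ ≤ ‖v‖ * ‖f‖ := real_inner_le_norm v f
    have h4 : ‖v‖ ≤ ‖f‖ / c := by
      rcases eq_or_lt_of_le (norm_nonneg v) with h | h
      · rw [← h]; positivity
      · have : c * ‖v‖ ^ 2 ≤ ‖v‖ * ‖f‖ := by nlinarith [hBpos v, sq_nonneg t]
        rw [le_div_iff₀ hc]
        nlinarith
    have h5 : ⟪v, f⟫ ≤ ‖f‖ ^ 2 / c := by
      calc ⟪v, f⟫ ≤ ‖v‖ * ‖f‖ := h3
        _ ≤ (‖f‖ / c) * ‖f‖ := by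
            apply mul_le_mul_of_nonneg_right h4 (norm_nonneg f)
        _ = ‖f‖ ^ 2 / c := by ring
    nlinarith [hAnn v]
  -- B kills the limit G f
  have hBGf : B (G f) = 0 := by
    have h1 : Filter.Tendsto (fun μ : ℝ => B (R μ f)) Filter.atTop (nhds (B (G f))) :=
      (B.continuous.tendsto (G f)).comp (hG f)
    have h2 : Filter.Tendsto (fun μ : ℝ => B (R μ f)) Filter.atTop (nhds 0) := by
      set K := Real.sqrt (‖B‖ * (‖f‖ ^ 2 / c)) with hK
      have hK0 : 0 ≤ K := Real.sqrt_nonneg _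
      have hKsq : K ^ 2 = ‖B‖ * (‖f‖ ^ 2 / c) := by
        rw [hK, sq, Real.mul_self_sqrt]
        positivity
      have hbound : ∀ᶠ μ : ℝ in Filter.atTop, ‖B (R μ f)‖ ≤ K / μ := by
        filter_upwards [Filter.eventually_ge_atTop (1:ℝ)] with μ hμ
        have hμ0 : (0:ℝ) < μ := lt_of_lt_of_le one_pos hμ
        set v := R μ f with hv
        -- ‖B v‖ ^ 2 ≤ ‖B‖ * ⟪v, B v⟫
        have hcs := form_cauchy_schwarz B hB hBpos (B v) v
        have hb1 : ⟪B v, B (B v)⟫ ≤ ‖B‖ * ‖B v‖ ^ 2 := by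
          calc ⟪B v, B (B v)⟫ ≤ ‖B v‖ * ‖B (B v)‖ := real_inner_le_norm _ _
            _ ≤ ‖B v‖ * (‖B‖ * ‖B v‖) := by
                apply mul_le_mul_of_nonneg_left (B.le_opNorm (B v)) (norm_nonneg _)
            _ = ‖B‖ * ‖B v‖ ^ 2 := by ring
        have hb2 : ‖B v‖ ^ 2 ≤ ‖B‖ * ⟪v, B v⟫ := by
          have hBvBv : ⟪B v, B v⟫ = ‖B v‖ ^ 2 := real_inner_self_eq_norm_sq _
          rcases eq_or_lt_of_le (norm_nonneg (B v)) with h | h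
          · rw [← h]; nlinarith [hBpos v, norm_nonneg B]
          · nlinarith [hBpos v, norm_nonneg B, hcs, hb1,
              mul_le_mul_of_nonneg_right hb1 (hBpos v), mul_pos h h]
        have hb3 : ⟪v, B v⟫ * μ ^ 2 ≤ ‖f‖ ^ 2 / c := by nlinarith [hBres μ]
        have s1 : (‖B v‖ * μ) ^ 2 ≤ K ^ 2 := by
          rw [mul_pow, hKsq]
          nlinarith [mul_le_mul_of_nonneg_right hb2 (sq_nonneg μ),
            mul_le_mul_of_nonneg_left hb3 (norm_nonneg B)]
        have s2 : ‖B v‖ * μ ≤ K := by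
          calc ‖B v‖ * μ = Real.sqrt ((‖B v‖ * μ) ^ 2) := (Real.sqrt_sq (by positivity)).symm
            _ ≤ Real.sqrt (K ^ 2) := Real.sqrt_le_sqrt s1
            _ = K := Real.sqrt_sq hK0
        exact (le_div_iff₀ hμ0).mpr s2
      exact squeeze_zero_norm' hbound
        (Filter.Tendsto.div_atTop tendsto_const_nhds Filter.tendsto_id)
    exact tendsto_nhds_unique h1 h2
  -- consequence: R t (A (G f)) = G f
  have hRAG : ∀ t : ℝ, R t (A (G f)) = G f := by
    intro t
    have : A (G f) = A (G f) + t ^ 2 • B (G f) := by rw [hBGf]; simp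
    rw [this, hRrz]
  -- ⟪G f, A (G f)⟫ = L
  set L := ⟪f, G f⟫ with hL
  have hGAG : ⟪G f, A (G f)⟫ = L := by
    have h1 : Filter.Tendsto (fun μ : ℝ => ⟪R μ f, A (G f)⟫) Filter.atTop
        (nhds ⟪G f, A (G f)⟫) := (hG f).inner tendsto_const_nhds
    have h2 : (fun μ : ℝ => ⟪R μ f, A (G f)⟫) = fun _ => L := by
      funext μ
      rw [hRsym μ f (A (G f)), hRAG μ]
    rw [h2] at h1
    exact tendsto_nhds_unique h1 tendsto_const_nhds
  -- key operator identity applied to vectors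
  have hkey : ∀ x : H, κ ^ 2 • R κ x - R 1 x = (κ ^ 2 - 1) • R 1 (A (R κ x)) := by
    intro x
    set y := R κ x with hy
    have h1 : A y + κ ^ 2 • B y = x := hRlz κ x
    have himg : A (κ ^ 2 • y - R 1 x) + (1:ℝ) ^ 2 • B (κ ^ 2 • y - R 1 x)
        = (κ ^ 2 - 1) • A y := by
      have h2 : A (R 1 x) + (1:ℝ) ^ 2 • B (R 1 x) = x := hRlz 1 x
      have hBy : κ ^ 2 • B y = x - A y := eq_sub_of_add_eq' h1
      have h2' : B (R 1 x) = x - A (R 1 x) := by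
        have h2a : A (R 1 x) + B (R 1 x) = x := by
          have := h2; rwa [one_pow, one_smul] at this
        exact eq_sub_of_add_eq' h2a
      simp only [map_sub, map_smul, one_pow, one_smul]
      rw [hBy, h2']
      module
    calc κ ^ 2 • R κ x - R 1 x
        = R 1 (A (κ ^ 2 • y - R 1 x) + (1:ℝ) ^ 2 • B (κ ^ 2 • y - R 1 x)) := by
          rw [hRrz 1]
      _ = R 1 ((κ ^ 2 - 1) • A y) := by rw [himg]
      _ = (κ ^ 2 - 1) • R 1 (A (R κ x)) := by rw [map_smul]
  -- the vector e
  set e := f - A (G f) with he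
  -- step: ⟪e, R1 (A (Rκ e))⟫ = Q - L
  set Q := ⟪f, R 1 (A (R κ f))⟫ with hQ
  have hRke : R κ e = R κ f - G f := by
    rw [he, map_sub, hRAG]
  have hclaim1 : ⟪e, R 1 (A (R κ e))⟫ = Q - L := by
    have hX : R 1 (A (R κ e)) = R 1 (A (R κ f)) - G f := by
      rw [hRke, map_sub, map_sub, hRAG]
    rw [hX, he]
    rw [inner_sub_left, inner_sub_right, inner_sub_right]
    have t1 : ⟪A (G f), R 1 (A (R κ f))⟫ = L := by
      rw [← hRsym 1, hRAG, ← hAsym, ← hRsym κ, hRAG]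
      exact real_inner_comm _ _
    have t2 : ⟪A (G f), G f⟫ = L := by
      rw [real_inner_comm]; exact hGAG
    rw [t1, t2]
    ring
  -- step: 0 ≤ κ² ⟪e, Rκ e⟫ - ⟪e, R1 e⟫
  have hclaim2 : ⟪e, R 1 e⟫ ≤ κ ^ 2 * ⟪e, R κ e⟫ := by
    set y := R κ e with hy
    set z := R 1 e with hz
    have h1 : A y + κ ^ 2 • B y = e := hRlz κ e
    have h2' : A z + B z = e := by
      have := hRlz 1 e; rwa [one_pow, one_smul] at this
    clear_value y z
    have hyAz : ⟪y, A z⟫ = ⟪z, A y⟫ := by rw [← hAsym, real_inner_comm]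
    have hyBz : ⟪y, B z⟫ = ⟪z, B y⟫ := by rw [← hBsym, real_inner_comm]
    have P1 : ⟪e, y⟫ = ⟪y, A y⟫ + κ ^ 2 * ⟪y, B y⟫ := by
      rw [← h1, inner_add_left, real_inner_smul_left, real_inner_comm (A y) y,
        real_inner_comm (B y) y]
    have P2 : ⟪e, z⟫ = ⟪z, A z⟫ + ⟪z, B z⟫ := by
      rw [← h2', inner_add_left, real_inner_comm (A z) z, real_inner_comm (B z) z]
    have P3 : ⟪e, z⟫ = ⟪z, A y⟫ + κ ^ 2 * ⟪z, B y⟫ := by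
      rw [← h1, inner_add_left, real_inner_smul_left, hAsym, hBsym, hyAz, hyBz]
    have P4 : ⟪z, A z⟫ + ⟪z, B z⟫ = ⟪z, A y⟫ + κ ^ 2 * ⟪z, B y⟫ := by
      rw [← P2, P3]
    have hdAd : ⟪z - κ ^ 2 • y, A (z - κ ^ 2 • y)⟫
        = ⟪z, A z⟫ - 2 * (κ ^ 2 * ⟪z, A y⟫) + κ ^ 2 * (κ ^ 2 * ⟪y, A y⟫) := by
      simp only [map_sub, map_smul, inner_sub_left, inner_sub_right,
        real_inner_smul_left, real_inner_smul_right, hyAz]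
      ring
    have hdBd : ⟪z - κ ^ 2 • y, B (z - κ ^ 2 • y)⟫
        = ⟪z, B z⟫ - 2 * (κ ^ 2 * ⟪z, B y⟫) + κ ^ 2 * (κ ^ 2 * ⟪y, B y⟫) := by
      simp only [map_sub, map_smul, inner_sub_left, inner_sub_right,
        real_inner_smul_left, real_inner_smul_right, hyBz]
      ring
    have n1 := hAnn (z - κ ^ 2 • y)
    have n2 := hBpos (z - κ ^ 2 • y)
    have n3 := hAnn z
    rw [hdAd] at n1
    rw [hdBd] at n2
    have main : κ ^ 2 * (κ ^ 2 * ⟪e, y⟫ - ⟪e, z⟫)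
        = (⟪z, A z⟫ - 2 * (κ ^ 2 * ⟪z, A y⟫) + κ ^ 2 * (κ ^ 2 * ⟪y, A y⟫))
          + κ ^ 2 * (⟪z, B z⟫ - 2 * (κ ^ 2 * ⟪z, B y⟫) + κ ^ 2 * (κ ^ 2 * ⟪y, B y⟫))
          + (κ ^ 2 - 1) * ⟪z, A z⟫ := by
      rw [P1, P2]
      linear_combination (-2*κ^2) * P4
    have hκ1 : (1:ℝ) ≤ κ ^ 2 := by nlinarith
    nlinarith [main, n1, n2, n3, hκ0, hκ1, mul_nonneg hκ0.le n2,
      mul_nonneg (by linarith : (0:ℝ) ≤ κ ^ 2 - 1) n3]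
  -- assemble
  rw [div_le_iff₀ hκ0]
  have hfkey := hkey f
  have hQid : κ ^ 2 * ⟪f, R κ f⟫ - ⟪f, R 1 f⟫ = (κ ^ 2 - 1) * Q := by
    have := congrArg (fun w => ⟪f, w⟫) hfkey
    simpa [inner_sub_right, real_inner_smul_right] using this
  have hekey := hkey e
  have heid : κ ^ 2 * ⟪e, R κ e⟫ - ⟪e, R 1 e⟫ = (κ ^ 2 - 1) * (Q - L) := by
    have := congrArg (fun w => ⟪e, w⟫) hekey
    simp only [inner_sub_right, real_inner_smul_right] at this
    rw [this, hclaim1]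
  nlinarith [heid, hclaim2, hQid]
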